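/- Let R be a commutative ring and let f = a₀ + a₁x + ⋯ + a_n x^n ∈ R[x]. Then the R-algebra homomorphism R[x] → R[x] sending x to f is injective if and only if the annihilator in R of the ideal (a₁, …, a_n)R is zero, i.e., the only b ∈ R with b·a_i = 0 for all 1 ≤ i ≤ n is b = 0. -/

import Mathlib

open Polynomial

private lemma comp_eq_zero_aux {R : Type*} [CommRing R] (F : R[X])
    (hF0 : F.coeff 0 = 0) (hreg : F ∈ nonZeroDivisors R[X]) :
    ∀ g : R[X], g.comp F = 0 → g = 0 := by
  suffices h : ∀ n : ℕ, ∀ g : R[X], g.natDegree ≤ n → g.comp F = 0 → g = 0 from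
    fun g hg => h g.natDegree g le_rfl hg
  intro n
  induction n with
  | zero =>
    intro g hdeg hg
    have hgC : g = C (g.coeff 0) := eq_C_of_natDegree_eq_zero (Nat.le_zero.mp hdeg)
    rw [hgC] at hg ⊢
    rwa [C_comp] at hg
  | succ n ih =>
    intro g hdeg hg
    have hdecomp : g.divX * X + C (g.coeff 0) = g := divX_mul_X_add g
    have hcomp : g.divX.comp F * F + C (g.coeff 0) = 0 := by
      have := congrArg (fun p => p.comp F) hdecomp
      simpa [add_comp, mul_comp, X_comp, C_comp, hg] using this
    have hc0 : g.coeff 0 = 0 := by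
      have := congrArg (fun p => p.coeff 0) hcomp
      simpa [coeff_add, mul_coeff_zero, hF0, coeff_C] using this
    have hmul : g.divX.comp F * F = 0 := by
      rw [hc0, map_zero, add_zero] at hcomp; exact hcomp
    have hdivX : g.divX.comp F = 0 := by
      have := hreg.2 _ hmul
      simpa using this
    have hd0 : g.divX = 0 := by
      refine ih g.divX ?_ hdivX
      have := natDegree_divX_eq_natDegree_tsub_one (p := g)
      omega
    rw [hd0, zero_mul, zero_add, hc0, map_zero] at hdecomp
    exact hdecomp.symm

/-- Theorem: for `f = a₀ + a₁x + ⋯ + aₙxⁿ ∈ R[x]`, the `R`-algebra endomorphism of `R[x]`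
sending `x` to `f` is injective iff the annihilator of the ideal `(a₁, …, aₙ)R` is zero. -/
theorem aeval_injective_iff_annihilator_eq_zero (R : Type*) [CommRing R] (f : R[X]) :
    Function.Injective (Polynomial.aeval f : R[X] →ₐ[R] R[X]) ↔
      ∀ b : R, (∀ i : ℕ, 1 ≤ i → b * f.coeff i = 0) → b = 0 := by
  set a₀ : R := f.coeff 0 with ha₀
  constructor
  · intro hinj b hb
    have h : (Polynomial.aeval f : R[X] →ₐ[R] R[X]) (C b * (X - C a₀)) = 0 := by
      rw [map_mul, map_sub, aeval_X, aeval_C, aeval_C]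
      ext i
      rcases Nat.eq_zero_or_pos i with hi | hi
      · subst hi
        simp [mul_coeff_zero, coeff_sub, coeff_C, ha₀]
      · have : b * f.coeff i = 0 := hb i hi
        simp [coeff_C_mul, coeff_sub, coeff_C, Nat.pos_iff_ne_zero.mp hi, this]
    have hg : C b * (X - C a₀) = 0 := hinj (h.trans (map_zero _).symm)
    have := congrArg (fun p => p.coeff 1) hg
    simpa [coeff_C_mul, coeff_sub, coeff_C] using this
  · intro H
    set F : R[X] := f - C a₀ with hF
    have hF0 : F.coeff 0 = 0 := by simp [hF, ha₀]
    have hFi : ∀ i : ℕ, 1 ≤ i → F.coeff i = f.coeff i := by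
      intro i hi
      simp [hF, coeff_sub, coeff_C, Nat.pos_iff_ne_zero.mp hi]
    have hreg : F ∈ nonZeroDivisors R[X] := by
      rw [Polynomial.mem_nonZeroDivisors_iff]
      intro a ha
      refine H a fun i hi => ?_
      have := congrArg (fun p => p.coeff i) ha
      simpa [coeff_smul, smul_eq_mul, hFi i hi] using this
    have key := comp_eq_zero_aux F hF0 hreg
    rw [injective_iff_map_eq_zero]
    intro g hg
    have hcomp : g.comp f = 0 := by rwa [comp_eq_aeval]
    have hXC : (X + C a₀).comp F = f := by
      simp [add_comp, X_comp, C_comp, hF]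
    have h1 : (g.comp (X + C a₀)).comp F = 0 := by
      rw [comp_assoc, hXC]; exact hcomp
    have h2 : g.comp (X + C a₀) = 0 := key _ h1
    have h3 : (g.comp (X + C a₀)).comp (X - C a₀) = g := by
      rw [comp_assoc]
      simp [add_comp, X_comp, C_comp]
    rw [h2, zero_comp] at h3
    exact h3.symm
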